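/- Let A be a real M×N matrix such that AA* is invertible, and let γ_t(A) denote its preconditioned restricted isometry constant of order t. Let v ∈ ℝ^N be a vector with supp(v) = T″ and let T′ be an index set with |T′ ∪ T″| ≤ t. Then ‖[(I − A*(AA*)⁻¹A)v]_{T′}‖₂ ≤ γ_t(A) · ‖v‖₂. -/

import Mathlib

open Matrix

/-- The Euclidean (ℓ²) norm of a vector in ℝⁿ. -/
noncomputable def norm2 {n : ℕ} (x : Fin n → ℝ) : ℝ := Real.sqrt (∑ i, x i ^ 2)

/-- `x` is `s`-sparse: it has at most `s` nonzero entries. -/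
def sparse {n : ℕ} (s : ℕ) (x : Fin n → ℝ) : Prop :=
  (Finset.univ.filter fun i => x i ≠ 0).card ≤ s

/-- `restrict T x` is the vector agreeing with `x` on `T` and zero outside `T`. -/
def restrict {n : ℕ} (T : Finset (Fin n)) (x : Fin n → ℝ) : Fin n → ℝ :=
  fun i => if i ∈ T then x i else 0

/-- The preconditioned matrix `(AAᴴ)^{-1/2} A`, where `(AAᴴ)^{-1/2}` is the inverse of the
positive semidefinite square root of `AAᴴ`. -/
noncomputable def precond {M N : ℕ} (A : Matrix (Fin M) (Fin N) ℝ) :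
    Matrix (Fin M) (Fin N) ℝ :=
  (((Matrix.posSemidef_self_mul_conjTranspose A).1.eigenvectorUnitary : Matrix (Fin M) (Fin M) ℝ) *
    diagonal (fun i => Real.sqrt ((Matrix.posSemidef_self_mul_conjTranspose A).1.eigenvalues i)) *
    (star (Matrix.posSemidef_self_mul_conjTranspose A).1.eigenvectorUnitary : Matrix (Fin M) (Fin M) ℝ))⁻¹ * A

/-- The preconditioned restricted isometry constant `γ_s(A)`: the smallest `γ ≥ 0` such that
`(1-γ)‖x‖₂² ≤ ‖(AAᴴ)^{-1/2}Ax‖₂²` for all `s`-sparse `x`. -/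
noncomputable def pripConst {M N : ℕ} (A : Matrix (Fin M) (Fin N) ℝ) (s : ℕ) : ℝ :=
  sInf {γ : ℝ | 0 ≤ γ ∧ ∀ x : Fin N → ℝ, sparse s x →
    (1 - γ) * norm2 x ^ 2 ≤ norm2 ((precond A).mulVec x) ^ 2}

/-- The restricted isometry constant `δ_s(B)`: the smallest `δ ≥ 0` such that
`(1-δ)‖x‖₂² ≤ ‖Bx‖₂² ≤ (1+δ)‖x‖₂²` for all `s`-sparse `x`. -/
noncomputable def ripConst {m n : ℕ} (B : Matrix (Fin m) (Fin n) ℝ) (s : ℕ) : ℝ :=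
  sInf {δ : ℝ | 0 ≤ δ ∧ ∀ x : Fin n → ℝ, sparse s x →
    (1 - δ) * norm2 x ^ 2 ≤ norm2 (B.mulVec x) ^ 2 ∧
      norm2 (B.mulVec x) ^ 2 ≤ (1 + δ) * norm2 x ^ 2}

/-- `θ_t(A) = δ_t((AAᴴ)⁻¹A)`. -/
noncomputable def thetaConst {M N : ℕ} (A : Matrix (Fin M) (Fin N) ℝ) (t : ℕ) : ℝ :=
  ripConst ((A * Aᴴ)⁻¹ * A) t

-- aux lemmas
lemma norm2_nonneg' {n : ℕ} (x : Fin n → ℝ) : 0 ≤ norm2 x := Real.sqrt_nonneg _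

lemma norm2_sq' {n : ℕ} (x : Fin n → ℝ) : norm2 x ^ 2 = x ⬝ᵥ x := by
  rw [norm2, Real.sq_sqrt (Finset.sum_nonneg fun i _ => sq_nonneg _)]
  simp [dotProduct, sq]

lemma precond_key {M N : ℕ} (A : Matrix (Fin M) (Fin N) ℝ) (hA : IsUnit (A * Aᴴ).det) :
    (precond A)ᴴ * precond A = Aᴴ * (A * Aᴴ)⁻¹ * A := by
  set hP := Matrix.posSemidef_self_mul_conjTranspose A
  set S := ((hP.1.eigenvectorUnitary : Matrix (Fin M) (Fin M) ℝ) *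
    diagonal (fun i => Real.sqrt (hP.1.eigenvalues i)) *
    (star hP.1.eigenvectorUnitary : Matrix (Fin M) (Fin M) ℝ)) with hSdef
  have hSS : S * S = A * Aᴴ := by
    have hsp := hP.1.spectral_theorem
    rw [Unitary.conjStarAlgAut_apply] at hsp
    have hu : (star hP.1.eigenvectorUnitary : Matrix (Fin M) (Fin M) ℝ) * hP.1.eigenvectorUnitary = 1 :=
      Unitary.coe_star_mul_self _
    conv_rhs => rw [hsp]
    rw [hSdef]
    simp only [Matrix.mul_assoc]
    rw [← Matrix.mul_assoc _ _ (diagonal _ * _), hu, Matrix.one_mul, ← Matrix.mul_assoc (diagonal _), diagonal_mul_diagonal]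
    congr 3
    funext i
    exact Real.mul_self_sqrt (hP.eigenvalues_nonneg i)
  have hSH : Sᴴ = S := by
    rw [hSdef]
    simp only [Matrix.star_eq_conjTranspose, conjTranspose_mul, conjTranspose_conjTranspose,
      diagonal_conjTranspose, star_trivial, Matrix.mul_assoc]
  have hinv : (A * Aᴴ)⁻¹ = S⁻¹ * S⁻¹ := by rw [← hSS, Matrix.mul_inv_rev]
  rw [precond, conjTranspose_mul, Matrix.conjTranspose_nonsing_inv, hSH, hinv, ← hSdef]
  simp only [Matrix.mul_assoc]

lemma norm2_precond {M N : ℕ} (A : Matrix (Fin M) (Fin N) ℝ) (hA : IsUnit (A * Aᴴ).det)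
    (x : Fin N → ℝ) :
    norm2 ((precond A).mulVec x) ^ 2 = x ⬝ᵥ ((Aᴴ * (A * Aᴴ)⁻¹ * A).mulVec x) := by
  conv_rhs => rw [← precond_key A hA, ← mulVec_mulVec, dotProduct_mulVec,
    conjTranspose_eq_transpose_of_trivial, vecMul_transpose]
  rw [norm2_sq']

theorem test : True := trivial

section main
variable {M N : ℕ}

lemma P_herm (A : Matrix (Fin M) (Fin N) ℝ) :
    (Aᴴ * (A * Aᴴ)⁻¹ * A)ᴴ = Aᴴ * (A * Aᴴ)⁻¹ * A := by
  have h : ((A * Aᴴ)⁻¹)ᴴ = (A * Aᴴ)⁻¹ := by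
    rw [Matrix.conjTranspose_nonsing_inv, conjTranspose_mul, conjTranspose_conjTranspose]
  rw [conjTranspose_mul, conjTranspose_mul, conjTranspose_conjTranspose, h, Matrix.mul_assoc]

lemma P_idem (A : Matrix (Fin M) (Fin N) ℝ) (hA : IsUnit (A * Aᴴ).det) :
    (Aᴴ * (A * Aᴴ)⁻¹ * A) * (Aᴴ * (A * Aᴴ)⁻¹ * A) = Aᴴ * (A * Aᴴ)⁻¹ * A := by
  have : (A * Aᴴ)⁻¹ * (A * Aᴴ) = 1 := Matrix.nonsing_inv_mul _ hA
  calc Aᴴ * (A * Aᴴ)⁻¹ * A * (Aᴴ * (A * Aᴴ)⁻¹ * A)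
      = Aᴴ * (((A * Aᴴ)⁻¹ * (A * Aᴴ)) * ((A * Aᴴ)⁻¹ * A)) := by
        simp only [Matrix.mul_assoc]
    _ = Aᴴ * (A * Aᴴ)⁻¹ * A := by rw [this, Matrix.one_mul, Matrix.mul_assoc]

lemma Q_herm (A : Matrix (Fin M) (Fin N) ℝ) :
    ((1 : Matrix (Fin N) (Fin N) ℝ) - Aᴴ * (A * Aᴴ)⁻¹ * A)ᴴ
      = 1 - Aᴴ * (A * Aᴴ)⁻¹ * A := by
  rw [conjTranspose_sub, conjTranspose_one, P_herm]

lemma Q_idem (A : Matrix (Fin M) (Fin N) ℝ) (hA : IsUnit (A * Aᴴ).det) :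
    ((1 : Matrix (Fin N) (Fin N) ℝ) - Aᴴ * (A * Aᴴ)⁻¹ * A)
      * (1 - Aᴴ * (A * Aᴴ)⁻¹ * A) = 1 - Aᴴ * (A * Aᴴ)⁻¹ * A := by
  simp only [Matrix.sub_mul, Matrix.mul_sub, Matrix.one_mul, Matrix.mul_one, P_idem A hA]
  abel

/-- bilinear form of a symmetric idempotent matrix -/
lemma dot_idem {n : ℕ} (Q : Matrix (Fin n) (Fin n) ℝ) (hH : Qᴴ = Q) (hI : Q * Q = Q)
    (x y : Fin n → ℝ) : x ⬝ᵥ Q.mulVec y = (Q.mulVec x) ⬝ᵥ (Q.mulVec y) := by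
  have hT : Qᵀ = Q := by rw [← conjTranspose_eq_transpose_of_trivial, hH]
  conv_lhs => rw [← hI, ← mulVec_mulVec, dotProduct_mulVec]
  rw [show x ᵥ* Q = Q *ᵥ x from by rw [← hT, vecMul_transpose, hT]]

end main

lemma dot_self_nonneg' {n : ℕ} (a : Fin n → ℝ) : 0 ≤ a ⬝ᵥ a := by
  rw [← norm2_sq']; positivity

lemma key_est {M N : ℕ} (A : Matrix (Fin M) (Fin N) ℝ) (hA : IsUnit (A * Aᴴ).det)
    (t : ℕ) (v : Fin N → ℝ) (T' T'' : Finset (Fin N))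
    (hv : ∀ i, v i ≠ 0 ↔ i ∈ T'') (hT : (T' ∪ T'').card ≤ t)
    (γ : ℝ) (hγ0 : 0 ≤ γ)
    (hγ : ∀ x : Fin N → ℝ, sparse t x →
      (1 - γ) * norm2 x ^ 2 ≤ norm2 ((precond A).mulVec x) ^ 2) :
    norm2 (restrict T' ((1 - Aᴴ * (A * Aᴴ)⁻¹ * A).mulVec v)) ≤ γ * norm2 v := by
  set Q : Matrix (Fin N) (Fin N) ℝ := 1 - Aᴴ * (A * Aᴴ)⁻¹ * A with hQ
  have hH : Qᴴ = Q := Q_herm A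
  have hI : Q * Q = Q := Q_idem A hA
  set w : Fin N → ℝ := restrict T' (Q.mulVec v) with hwdef
  have qb : ∀ x : Fin N → ℝ, sparse t x → x ⬝ᵥ Q.mulVec x ≤ γ * (x ⬝ᵥ x) := by
    intro x hx
    have h1 := hγ x hx
    rw [norm2_precond A hA, norm2_sq'] at h1
    have h2 : x ⬝ᵥ Q.mulVec x = x ⬝ᵥ x - x ⬝ᵥ ((Aᴴ * (A * Aᴴ)⁻¹ * A).mulVec x) := by
      rw [hQ, Matrix.sub_mulVec, dotProduct_sub, Matrix.one_mulVec]
    nlinarith [h1, h2]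
  have hsv : sparse t v := by
    unfold sparse
    have he : (Finset.univ.filter fun i => v i ≠ 0) = T'' := by
      ext i; simp [hv i]
    rw [he]
    exact le_trans (Finset.card_le_card Finset.subset_union_right) hT
  have hsw : sparse t w := by
    unfold sparse
    refine le_trans (Finset.card_le_card ?_)
      (le_trans (Finset.card_le_card (Finset.subset_union_left (s₂ := T''))) hT)
    intro i hi
    rw [Finset.mem_filter] at hi
    by_contra h
    exact hi.2 (by simp [hwdef, restrict, h])
  have h1 : w ⬝ᵥ w = w ⬝ᵥ Q.mulVec v := by
    refine Finset.sum_congr rfl fun i _ => ?_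
    by_cases h : i ∈ T' <;> simp [hwdef, restrict, h]
  have e : ∀ a b : Fin N → ℝ, a ⬝ᵥ b = ∑ i, a i * b i := fun _ _ => rfl
  have cs : (Q.mulVec w ⬝ᵥ Q.mulVec v) ^ 2
      ≤ (Q.mulVec w ⬝ᵥ Q.mulVec w) * (Q.mulVec v ⬝ᵥ Q.mulVec v) := by
    rw [e, e, e]
    simpa [pow_two] using
      Finset.sum_mul_sq_le_sq_mul_sq Finset.univ (Q.mulVec w) (Q.mulVec v)
  have e1 : w ⬝ᵥ w = Q.mulVec w ⬝ᵥ Q.mulVec v := by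
    rw [h1, dot_idem Q hH hI]
  have e2 : Q.mulVec w ⬝ᵥ Q.mulVec w = w ⬝ᵥ Q.mulVec w := (dot_idem Q hH hI w w).symm
  have e3 : Q.mulVec v ⬝ᵥ Q.mulVec v = v ⬝ᵥ Q.mulVec v := (dot_idem Q hH hI v v).symm
  have qbw := qb w hsw
  have qbv := qb v hsv
  have hwQ : 0 ≤ Q.mulVec w ⬝ᵥ Q.mulVec w := dot_self_nonneg' _
  have hvQ : 0 ≤ Q.mulVec v ⬝ᵥ Q.mulVec v := dot_self_nonneg' _
  -- main quartic inequality
  have hb1 : Q.mulVec w ⬝ᵥ Q.mulVec w ≤ γ * (w ⬝ᵥ w) := by rw [e2]; exact qbw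
  have hb2 : Q.mulVec v ⬝ᵥ Q.mulVec v ≤ γ * (v ⬝ᵥ v) := by rw [e3]; exact qbv
  have quart : (w ⬝ᵥ w) ^ 2 ≤ (γ * (w ⬝ᵥ w)) * (γ * (v ⬝ᵥ v)) := by
    calc (w ⬝ᵥ w) ^ 2 = (Q.mulVec w ⬝ᵥ Q.mulVec v) ^ 2 := by rw [e1]
      _ ≤ (Q.mulVec w ⬝ᵥ Q.mulVec w) * (Q.mulVec v ⬝ᵥ Q.mulVec v) := cs
      _ ≤ (γ * (w ⬝ᵥ w)) * (γ * (v ⬝ᵥ v)) :=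
          mul_le_mul hb1 hb2 hvQ (le_trans hwQ hb1)
  rw [← norm2_sq', ← norm2_sq' v] at quart
  set a := norm2 w with ha
  set b := norm2 v with hb
  have ha0 : 0 ≤ a := norm2_nonneg' w
  have hb0 : 0 ≤ b := norm2_nonneg' v
  rcases eq_or_lt_of_le ha0 with h | h
  · rw [← h]; positivity
  · have h2 : a ^ 2 ≤ (γ * b) ^ 2 := by nlinarith [mul_pos h h]
    have h3 := Real.sqrt_le_sqrt h2
    rwa [Real.sqrt_sq ha0, Real.sqrt_sq (by positivity)] at h3

theorem stmt1 {M N : ℕ} (A : Matrix (Fin M) (Fin N) ℝ) (hA : IsUnit (A * Aᴴ).det)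
    (t : ℕ) (v : Fin N → ℝ) (T' T'' : Finset (Fin N))
    (hv : ∀ i, v i ≠ 0 ↔ i ∈ T'')
    (hT : (T' ∪ T'').card ≤ t) :
    norm2 (restrict T' ((1 - Aᴴ * (A * Aᴴ)⁻¹ * A).mulVec v)) ≤ pripConst A t * norm2 v := by
  have hone : (1 : ℝ) ∈ {γ : ℝ | 0 ≤ γ ∧ ∀ x : Fin N → ℝ, sparse t x →
      (1 - γ) * norm2 x ^ 2 ≤ norm2 ((precond A).mulVec x) ^ 2} := by
    refine ⟨zero_le_one, fun x _ => ?_⟩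
    rw [sub_self, zero_mul]
    positivity
  by_cases hv0 : norm2 v = 0
  · have hvz : v = 0 := by
      have hsum : ∑ i, v i ^ 2 = 0 := by
        have h := hv0
        rw [norm2, Real.sqrt_eq_zero (Finset.sum_nonneg fun i _ => sq_nonneg _)] at h
        exact h
      funext i
      have := (Finset.sum_eq_zero_iff_of_nonneg fun i _ => sq_nonneg (v i)).mp hsum i
        (Finset.mem_univ i)
      exact (pow_eq_zero_iff two_ne_zero).mp this
    rw [hvz]
    have h0 : restrict T' ((1 - Aᴴ * (A * Aᴴ)⁻¹ * A).mulVec 0) = fun _ => (0:ℝ) := by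
      funext i; simp [restrict]
    rw [h0]
    simp [norm2]
  · have hvpos : 0 < norm2 v := lt_of_le_of_ne (norm2_nonneg' v) (Ne.symm hv0)
    have hle : norm2 (restrict T' ((1 - Aᴴ * (A * Aᴴ)⁻¹ * A).mulVec v)) / norm2 v
        ≤ pripConst A t := by
      unfold pripConst
      refine le_csInf ⟨1, hone⟩ fun γ hγ => ?_
      rw [div_le_iff₀ hvpos]
      exact key_est A hA t v T' T'' hv hT γ hγ.1 hγ.2
    have hfin := mul_le_mul_of_nonneg_right hle hvpos.le
    rwa [div_mul_cancel₀ _ hv0] at hfin
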